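/- arXiv:1209.5248 — 2 statements merged into one kernel-verified Lean document; each statement's English description precedes it below -/
import Mathlib

section
/- Let G be a group of order 32 containing a subgroup K = ⟨a⟩ × ⟨b⟩ ≅ C4 × C4 of index 2, such that there exists q ∈ G \ K with a^q = b and b^q = a, and such that Z(G) = ⟨ab⟩. Then G contains an involution outside K, and consequently G ≅ C4 ≀ C2 (the wreath product of C4 by C2). -/
open Equiv

/-- The wreath product `C4 ≀ C2`, realized as a subgroup of `Sym 8`: the two copies of
`C4` act regularly on `{0,1,2,3}` and `{4,5,6,7}`, and the `C2` swaps the blocks. -/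
def C4wrC2 : Subgroup (Perm (Fin 8)) :=
  Subgroup.closure
    {c[0, 1, 2, 3], c[4, 5, 6, 7], c[0, 4] * c[1, 5] * c[2, 6] * c[3, 7]}

/-! ### Auxiliary definitions -/

def σ8 : Perm (Fin 8) := c[0, 1, 2, 3]
def τ8 : Perm (Fin 8) := c[4, 5, 6, 7]
def ρ8 : Perm (Fin 8) := c[0, 4] * c[1, 5] * c[2, 6] * c[3, 7]

abbrev XX := (ZMod 4 × ZMod 4) × ZMod 2

/-- Multiplication rule on normal forms for `C4 ≀ C2`. -/
def μX : XX → XX → XX := fun p q =>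
  if p.2 = 0 then ((p.1.1 + q.1.1, p.1.2 + q.1.2), q.2)
  else ((p.1.1 + q.1.2, p.1.2 + q.1.1), p.2 + q.2)

/-- Normal form map. -/
def nf {M : Type*} [Group M] (x y z : M) (p : XX) : M :=
  x ^ p.1.1.val * y ^ p.1.2.val * z ^ p.2.val

lemma mul_nf_aux {M : Type*} [Group M] {x y : M} (hxy : x * y = y * x)
    (m n m' n' : ℕ) : (x ^ m * y ^ n) * (x ^ m' * y ^ n') = x ^ (m + m') * y ^ (n + n') := by
  have c : Commute x y := hxy
  calc (x ^ m * y ^ n) * (x ^ m' * y ^ n')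
      = x ^ m * (y ^ n * x ^ m') * y ^ n' := by group
    _ = x ^ m * (x ^ m' * y ^ n) * y ^ n' := by rw [← (c.pow_pow m' n).eq]
    _ = (x ^ m * x ^ m') * (y ^ n * y ^ n') := by group
    _ = x ^ (m + m') * y ^ (n + n') := by rw [pow_add, pow_add]

lemma nf_mul {M : Type*} [Group M] (x y z : M) (hx : x ^ 4 = 1) (hy : y ^ 4 = 1)
    (hz : z ^ 2 = 1) (hxy : x * y = y * x) (hzx : z * x * z = y) (p q : XX) :
    nf x y z p * nf x y z q = nf x y z (μX p q) := by
  have hz' : z⁻¹ = z := inv_eq_of_mul_eq_one_right (by rw [← pow_two]; exact hz)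
  have sx : SemiconjBy z x y := by
    show z * x = y * z
    rw [← hzx, mul_assoc, ← pow_two, hz, mul_one]
  have hzy : z * y * z = x := by
    rw [← hzx]
    calc z * (z * x * z) * z = (z * z) * x * (z * z) := by group
      _ = x := by rw [← pow_two, hz, one_mul, mul_one]
  have sy : SemiconjBy z y x := by
    show z * y = x * z
    rw [← hzy, mul_assoc, ← pow_two, hz, mul_one]
  have hxm : ∀ m : ℕ, x ^ (m % 4) = x ^ m := by
    intro m; conv_rhs => rw [← Nat.div_add_mod m 4]
    rw [pow_add, pow_mul, hx, one_pow, one_mul]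
  have hym : ∀ m : ℕ, y ^ (m % 4) = y ^ m := by
    intro m; conv_rhs => rw [← Nat.div_add_mod m 4]
    rw [pow_add, pow_mul, hy, one_pow, one_mul]
  have hzm : ∀ m : ℕ, z ^ (m % 2) = z ^ m := by
    intro m; conv_rhs => rw [← Nat.div_add_mod m 2]
    rw [pow_add, pow_mul, hz, one_pow, one_mul]
  obtain ⟨⟨i, j⟩, k⟩ := p
  obtain ⟨⟨i', j'⟩, k'⟩ := q
  have hk : k = 0 ∨ k = 1 := by revert k; decide
  rcases hk with rfl | rfl
  · show (x ^ i.val * y ^ j.val * z ^ (0 : ZMod 2).val) *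
        (x ^ i'.val * y ^ j'.val * z ^ k'.val)
      = x ^ ((i + i').val) * y ^ ((j + j').val) * z ^ k'.val
    rw [show ((0 : ZMod 2)).val = 0 from rfl, pow_zero, mul_one,
      ZMod.val_add, ZMod.val_add, hxm, hym]
    calc (x ^ i.val * y ^ j.val) * (x ^ i'.val * y ^ j'.val * z ^ k'.val)
        = ((x ^ i.val * y ^ j.val) * (x ^ i'.val * y ^ j'.val)) * z ^ k'.val := by group
      _ = x ^ (i.val + i'.val) * y ^ (j.val + j'.val) * z ^ k'.val := by
          rw [mul_nf_aux hxy]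
  · show (x ^ i.val * y ^ j.val * z ^ (1 : ZMod 2).val) *
        (x ^ i'.val * y ^ j'.val * z ^ k'.val)
      = x ^ ((i + j').val) * y ^ ((j + i').val) * z ^ ((1 : ZMod 2) + k').val
    rw [show ((1 : ZMod 2)).val = 1 from rfl, pow_one,
      ZMod.val_add, ZMod.val_add, ZMod.val_add, hxm, hym, hzm,
      show ((1 : ZMod 2)).val = 1 from rfl]
    have e1 : z * x ^ i'.val = y ^ i'.val * z := sx.pow_right i'.val
    have e2 : z * y ^ j'.val = x ^ j'.val * z := sy.pow_right j'.val
    calc (x ^ i.val * y ^ j.val * z) * (x ^ i'.val * y ^ j'.val * z ^ k'.val)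
        = x ^ i.val * y ^ j.val * (z * x ^ i'.val) * (y ^ j'.val * z ^ k'.val) := by group
      _ = x ^ i.val * y ^ j.val * (y ^ i'.val * z) * (y ^ j'.val * z ^ k'.val) := by rw [e1]
      _ = x ^ i.val * (y ^ j.val * y ^ i'.val) * (z * y ^ j'.val) * z ^ k'.val := by group
      _ = x ^ i.val * (y ^ j.val * y ^ i'.val) * (x ^ j'.val * z) * z ^ k'.val := by rw [e2]
      _ = (x ^ i.val * y ^ (j.val + i'.val)) * (x ^ j'.val * y ^ 0) * (z ^ (1 + k'.val)) := by
          rw [pow_add, pow_zero, pow_add, pow_one]; group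
      _ = x ^ (i.val + j'.val) * y ^ (j.val + i'.val + 0) * z ^ (1 + k'.val) := by
          rw [mul_nf_aux hxy]
      _ = x ^ (i.val + j'.val) * y ^ (j.val + i'.val) * z ^ (1 + k'.val) := by rw [Nat.add_zero]

set_option maxRecDepth 40000 in
lemma Φinj : Function.Injective (nf σ8 τ8 ρ8) := by decide

lemma Φσ : σ8 ^ 4 = 1 := by decide
lemma Φτ : τ8 ^ 4 = 1 := by decide
lemma Φρ : ρ8 ^ 2 = 1 := by decide
lemma Φcomm : σ8 * τ8 = τ8 * σ8 := by decide
lemma Φconj : ρ8 * σ8 * ρ8 = τ8 := by decide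
lemma Φa : nf σ8 τ8 ρ8 ((1, 0), 0) = σ8 := by decide
lemma Φb : nf σ8 τ8 ρ8 ((0, 1), 0) = τ8 := by decide
lemma Φr : nf σ8 τ8 ρ8 ((0, 0), 1) = ρ8 := by decide

/-- Let `G` be a group of order 32 with a subgroup `K = ⟨a⟩ × ⟨b⟩ ≅ C4 × C4` of index 2,
such that some `q ∉ K` swaps `a` and `b` by conjugation, and such that `Z(G) = ⟨ab⟩`.
Then `G` has an involution outside `K`, and `G ≅ C4 ≀ C2`. -/
theorem order_32_is_C4_wr_C2 (G : Type*) [Group G] (hcard : Nat.card G = 32)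
    (a b : G) (ha : orderOf a = 4) (hb : orderOf b = 4) (hab : a * b = b * a)
    (K : Subgroup G) (hK : K = Subgroup.closure {a, b})
    (hKiso : Nonempty (K ≃* Multiplicative (ZMod 4 × ZMod 4)))
    (hKindex : K.index = 2)
    (q : G) (hq : q ∉ K) (hqa : q⁻¹ * a * q = b) (hqb : q⁻¹ * b * q = a)
    (hcent : Subgroup.center G = Subgroup.zpowers (a * b)) :
    (∃ r : G, r ∉ K ∧ orderOf r = 2) ∧ Nonempty (G ≃* C4wrC2) := by
  have hfin : Finite G := Nat.finite_of_card_ne_zero (by omega)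
  have haK : a ∈ K := hK ▸ Subgroup.subset_closure (Set.mem_insert _ _)
  have hbK : b ∈ K := hK ▸ Subgroup.subset_closure (Set.mem_insert_of_mem _ rfl)
  have hx4 : a ^ 4 = 1 := by rw [← ha]; exact pow_orderOf_eq_one a
  have hy4 : b ^ 4 = 1 := by rw [← hb]; exact pow_orderOf_eq_one b
  -- K is commutative
  obtain ⟨e⟩ := hKiso
  have hKab : ∀ g ∈ K, ∀ h ∈ K, g * h = h * g := by
    intro g hg h hh
    have := e.injective (show e (⟨g, hg⟩ * ⟨h, hh⟩) = e (⟨h, hh⟩ * ⟨g, hg⟩) by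
      rw [map_mul, map_mul, mul_comm])
    exact Subtype.ext_iff.mp this
  -- q² is central
  have hq2K : q * q ∈ K := Subgroup.mul_self_mem_of_index_two hKindex q
  have hq2c : q * q ∈ Subgroup.center G := by
    rw [Subgroup.mem_center_iff]
    intro g
    by_cases hg : g ∈ K
    · exact hKab g hg (q * q) hq2K
    · have hk : g * q ∈ K := (Subgroup.mul_mem_iff_of_index_two hKindex).mpr
        (iff_of_false hg hq)
      have h1 : (g * q) * (q * q) = (q * q) * (g * q) := hKab _ hk _ hq2K
      have h2 : (g * (q * q)) * q = ((q * q) * g) * q := by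
        calc (g * (q * q)) * q = (g * q) * (q * q) := by group
          _ = (q * q) * (g * q) := h1
          _ = ((q * q) * g) * q := by group
      exact mul_right_cancel h2
  have hq2z : q * q ∈ Subgroup.zpowers (a * b) := hcent ▸ hq2c
  obtain ⟨n, hn⟩ := Subgroup.mem_zpowers_iff.mp hq2z
  -- the involution
  set r : G := q * a ^ (-n) with hrdef
  have hrK : r ∉ K := by
    intro hr
    apply hq
    have h1 : r * a ^ n ∈ K := mul_mem hr (K.zpow_mem haK n)
    have h2 : r * a ^ n = q := by rw [hrdef, zpow_neg]; group
    rwa [h2] at h1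
  have hsemi : SemiconjBy q b a := by
    show q * b = a * q
    rw [← hqa]; group
  have hsemi_z : ∀ m : ℤ, q * b ^ m = a ^ m * q := fun m => (hsemi.zpow_right m)
  have hCab : Commute a b := hab
  have hrr : r * r = 1 := by
    calc r * r = q * (a ^ (-n) * q) * a ^ (-n) := by rw [hrdef]; group
      _ = q * (q * b ^ (-n)) * a ^ (-n) := by rw [← hsemi_z (-n)]
      _ = (q * q) * (b ^ (-n) * a ^ (-n)) := by group
      _ = ((a * b) ^ n) * (b ^ (-n) * a ^ (-n)) := by rw [hn]
      _ = (a ^ n * b ^ n) * (b ^ (-n) * a ^ (-n)) := by rw [hCab.mul_zpow]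
      _ = 1 := by group
  have hz2 : r ^ 2 = 1 := by rw [pow_two]; exact hrr
  have hrne : r ≠ 1 := fun h => hrK (h ▸ K.one_mem)
  haveI : Fact (Nat.Prime 2) := ⟨Nat.prime_two⟩
  have hord : orderOf r = 2 := orderOf_eq_prime hz2 hrne
  -- conjugation by r swaps a and b
  have hra : r * a * r = b := by
    calc r * a * r = q * (a ^ (-n) * a * q) * a ^ (-n) := by rw [hrdef]; group
      _ = q * (a ^ (-n + 1) * q) * a ^ (-n) := by
          rw [show a ^ (-n) * a = a ^ (-n + 1) by rw [zpow_add, zpow_one]]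
      _ = q * (q * b ^ (-n + 1)) * a ^ (-n) := by rw [← hsemi_z (-n + 1)]
      _ = (q * q) * b ^ (-n + 1) * a ^ (-n) := by group
      _ = (a ^ n * b ^ n) * b ^ (-n + 1) * a ^ (-n) := by rw [← hCab.mul_zpow, hn]
      _ = a ^ n * (b ^ (n + (-n + 1))) * a ^ (-n) := by rw [zpow_add]; group
      _ = a ^ n * b * a ^ (-n) := by rw [show n + (-n + 1) = 1 by ring, zpow_one]
      _ = b * (a ^ n * a ^ (-n)) := by rw [(hCab.zpow_left n).eq]; group
      _ = b := by rw [← zpow_add, add_neg_cancel, zpow_zero, mul_one]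
  refine ⟨⟨r, hrK, hord⟩, ?_⟩
  -- the subgroup of words a^i b^j
  set S : Subgroup G :=
    { carrier := {g | ∃ i j : ℕ, g = a ^ i * b ^ j}
      one_mem' := ⟨0, 0, by simp⟩
      mul_mem' := by
        rintro g h ⟨i, j, rfl⟩ ⟨i', j', rfl⟩
        exact ⟨i + i', j + j', mul_nf_aux hab i j i' j'⟩
      inv_mem' := by
        rintro g ⟨i, j, rfl⟩
        refine ⟨3 * i, 3 * j, ?_⟩
        apply inv_eq_of_mul_eq_one_right
        rw [mul_nf_aux hab, show i + 3 * i = 4 * i by ring, show j + 3 * j = 4 * j by ring,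
          pow_mul, pow_mul, hx4, hy4, one_pow, one_pow, one_mul] } with hSdef
  have hKS : K ≤ S := by
    rw [hK, Subgroup.closure_le]
    rintro x hx
    rcases hx with rfl | hx
    · exact ⟨1, 0, by simp⟩
    · rcases hx with rfl
      exact ⟨0, 1, by simp⟩
  -- surjectivity of the normal form map
  have hxm : ∀ m : ℕ, a ^ (m % 4) = a ^ m := fun m => by
    rw [show (4 : ℕ) = orderOf a from ha.symm, pow_mod_orderOf]
  have hym : ∀ m : ℕ, b ^ (m % 4) = b ^ m := fun m => by
    rw [show (4 : ℕ) = orderOf b from hb.symm, pow_mod_orderOf]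
  have hsurj : Function.Surjective (nf a b r) := by
    intro g
    by_cases hg : g ∈ K
    · obtain ⟨i, j, rfl⟩ : ∃ i j : ℕ, g = a ^ i * b ^ j := hKS hg
      refine ⟨(((i : ZMod 4), (j : ZMod 4)), 0), ?_⟩
      show a ^ ((i : ZMod 4)).val * b ^ ((j : ZMod 4)).val * r ^ (0 : ZMod 2).val
          = a ^ i * b ^ j
      rw [ZMod.val_natCast, ZMod.val_natCast, hxm, hym,
        show ((0 : ZMod 2)).val = 0 from rfl, pow_zero, mul_one]
    · have hgr : g * r ∈ K := (Subgroup.mul_mem_iff_of_index_two hKindex).mpr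
        (iff_of_false hg hrK)
      obtain ⟨i, j, hij⟩ : ∃ i j : ℕ, g * r = a ^ i * b ^ j := hKS hgr
      refine ⟨(((i : ZMod 4), (j : ZMod 4)), 1), ?_⟩
      show a ^ ((i : ZMod 4)).val * b ^ ((j : ZMod 4)).val * r ^ (1 : ZMod 2).val
          = g
      rw [ZMod.val_natCast, ZMod.val_natCast, hxm, hym,
        show ((1 : ZMod 2)).val = 1 from rfl, pow_one, ← hij, mul_assoc, hrr, mul_one]
  have hcardX : Nat.card XX = Nat.card G := by
    rw [hcard]
    simp [Nat.card_prod, Nat.card_zmod]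
  have hbij : Function.Bijective (nf a b r) :=
    (Nat.bijective_iff_surjective_and_card (nf a b r)).mpr ⟨hsurj, hcardX⟩
  set E : XX ≃ G := Equiv.ofBijective (nf a b r) hbij with hEdef
  have hGmul := nf_mul a b r hx4 hy4 hz2 hab hra
  have hΦmul := nf_mul σ8 τ8 ρ8 Φσ Φτ Φρ Φcomm Φconj
  have key : ∀ g h : G, E.symm (g * h) = μX (E.symm g) (E.symm h) := by
    intro g h
    apply E.injective
    rw [Equiv.apply_symm_apply]
    show g * h = nf a b r (μX (E.symm g) (E.symm h))
    rw [← hGmul]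
    show g * h = E (E.symm g) * E (E.symm h)
    rw [Equiv.apply_symm_apply, Equiv.apply_symm_apply]
  set φ : G →* Perm (Fin 8) :=
    MonoidHom.mk' (fun g => nf σ8 τ8 ρ8 (E.symm g))
      (fun g h => by
        show nf σ8 τ8 ρ8 (E.symm (g * h)) =
          nf σ8 τ8 ρ8 (E.symm g) * nf σ8 τ8 ρ8 (E.symm h)
        rw [key, ← hΦmul]) with hφdef
  have hφinj : Function.Injective φ := fun g h hgh =>
    E.symm.injective (Φinj hgh)
  have hσmem : σ8 ∈ C4wrC2 := Subgroup.subset_closure (Set.mem_insert _ _)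
  have hτmem : τ8 ∈ C4wrC2 := Subgroup.subset_closure
    (Set.mem_insert_of_mem _ (Set.mem_insert _ _))
  have hρmem : ρ8 ∈ C4wrC2 := Subgroup.subset_closure
    (Set.mem_insert_of_mem _ (Set.mem_insert_of_mem _ rfl))
  have hEsymm : ∀ (g : G) (p : XX), nf a b r p = g → E.symm g = p := by
    intro g p hp
    apply E.injective
    rw [Equiv.apply_symm_apply]
    exact hp.symm
  have hrange : φ.range = C4wrC2 := by
    apply le_antisymm
    · rintro x ⟨g, rfl⟩
      show nf σ8 τ8 ρ8 (E.symm g) ∈ C4wrC2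
      exact mul_mem (mul_mem (pow_mem hσmem _) (pow_mem hτmem _)) (pow_mem hρmem _)
    · show Subgroup.closure _ ≤ φ.range
      rw [Subgroup.closure_le]
      intro x hx
      simp only [Set.mem_insert_iff, Set.mem_singleton_iff] at hx
      rcases hx with rfl | rfl | rfl
      · refine ⟨a, ?_⟩
        show nf σ8 τ8 ρ8 (E.symm a) = _
        rw [hEsymm a ((1, 0), 0) (by
          show a ^ ((1 : ZMod 4)).val * b ^ ((0 : ZMod 4)).val * r ^ (0 : ZMod 2).val = a
          rw [show ((1 : ZMod 4)).val = 1 from rfl, show ((0 : ZMod 4)).val = 0 from rfl,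
            show ((0 : ZMod 2)).val = 0 from rfl]
          group)]
        exact Φa
      · refine ⟨b, ?_⟩
        show nf σ8 τ8 ρ8 (E.symm b) = _
        rw [hEsymm b ((0, 1), 0) (by
          show a ^ ((0 : ZMod 4)).val * b ^ ((1 : ZMod 4)).val * r ^ (0 : ZMod 2).val = b
          rw [show ((1 : ZMod 4)).val = 1 from rfl, show ((0 : ZMod 4)).val = 0 from rfl,
            show ((0 : ZMod 2)).val = 0 from rfl]
          group)]
        exact Φb
      · refine ⟨r, ?_⟩
        show nf σ8 τ8 ρ8 (E.symm r) = _
        rw [hEsymm r ((0, 0), 1) (by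
          show a ^ ((0 : ZMod 4)).val * b ^ ((0 : ZMod 4)).val * r ^ (1 : ZMod 2).val = r
          rw [show ((0 : ZMod 4)).val = 0 from rfl, show ((1 : ZMod 2)).val = 1 from rfl]
          group)]
        exact Φr
  exact ⟨(MonoidHom.ofInjective hφinj).trans (MulEquiv.subgroupCongr hrange)⟩
end

section
/- Let G be a group with a normal subgroup N such that G/N ≅ S5 and N ≅ A4, such that C_G(N) ∩ N = 1 and C_G(N)·N has index 2 in G with C_G(N) ≅ A5. Then G is isomorphic to the index-2 subgroup S5 ⋔ S4 of S5 × S4 consisting of pairs (σ, τ) with sgn(σ) = sgn(τ). -/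
open Equiv

open Equiv Equiv.Perm Subgroup

private def pc1 : Perm (Fin 4) := swap 0 1 * swap 1 2
private def pc2 : Perm (Fin 4) := swap 0 1 * swap 1 3

private def a1 : (alternatingGroup (Fin 4)) := ⟨pc1, mem_alternatingGroup.mpr (by decide)⟩
private def a2 : (alternatingGroup (Fin 4)) := ⟨pc2, mem_alternatingGroup.mpr (by decide)⟩

private lemma a1_cube : a1 ^ 3 = 1 := by decide
private lemma a2_cube : a2 ^ 3 = 1 := by decide

private lemma orderOf_a1 : orderOf a1 = 3 := orderOf_eq_prime a1_cube (by decide)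
private lemma orderOf_a2 : orderOf a2 = 3 := orderOf_eq_prime a2_cube (by decide)

private lemma cardA4 : Nat.card (alternatingGroup (Fin 4)) = 12 := by
  rw [Nat.card_eq_fintype_card]; decide

private lemma mem_zp (a : alternatingGroup (Fin 4)) (ha : a ^ 3 = 1) (x) :
    x ∈ zpowers a ↔ x = 1 ∨ x = a ∨ x = a ^ 2 := by
  constructor
  · rintro hx
    obtain ⟨k, rfl⟩ := mem_zpowers_iff.mp hx
    rw [zpow_eq_zpow_emod' k ha]
    have h0 : (0:ℤ) ≤ k % 3 := Int.emod_nonneg k (by norm_num)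
    have h3 : k % 3 < 3 := Int.emod_lt_of_pos k (by norm_num)
    interval_cases h : k % 3
    · norm_num
    · norm_num
    · norm_num [zpow_two, pow_two]
  · rintro (rfl | rfl | rfl)
    · exact one_mem _
    · exact mem_zpowers _
    · exact pow_mem (mem_zpowers _) 2

private lemma zp_norm_le (a : alternatingGroup (Fin 4)) (ha : a ^ 3 = 1)
    (key : ∀ x : alternatingGroup (Fin 4),
      (x * a * x⁻¹ = 1 ∨ x * a * x⁻¹ = a ∨ x * a * x⁻¹ = a ^ 2) →
      (x = 1 ∨ x = a ∨ x = a ^ 2))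
    {x} (hx : x ∈ normalizer (zpowers a : Set (alternatingGroup (Fin 4)))) : x ∈ zpowers a := by
  rw [mem_zp a ha]
  have h1 := (Subgroup.mem_normalizer_iff.mp hx a).mp (mem_zpowers _)
  rw [mem_zp a ha] at h1
  exact key x h1

private lemma norm_a1 : normalizer (zpowers a1 : Set (alternatingGroup (Fin 4))) = zpowers a1 :=
  le_antisymm (fun x hx => zp_norm_le a1 a1_cube (by decide) hx) le_normalizer

private lemma norm_a2 : normalizer (zpowers a2 : Set (alternatingGroup (Fin 4))) = zpowers a2 :=
  le_antisymm (fun x hx => zp_norm_le a2 a2_cube (by decide) hx) le_normalizer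

private lemma factA4 : (Nat.card (alternatingGroup (Fin 4))).factorization 3 = 1 := by
  rw [cardA4]
  have h3 : Nat.Prime 3 := by norm_num
  have h1 : 1 ≤ (12:ℕ).factorization 3 :=
    (Nat.Prime.pow_dvd_iff_le_factorization h3 (by norm_num)).mp (by norm_num)
  have h2 : ¬ 2 ≤ (12:ℕ).factorization 3 := fun h =>
    (by norm_num : ¬ (3:ℕ)^2 ∣ 12) ((Nat.Prime.pow_dvd_iff_le_factorization h3 (by norm_num)).mpr h)
  omega

private instance fact3 : Fact (Nat.Prime 3) := ⟨by norm_num⟩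

private noncomputable def S1 : Sylow 3 (alternatingGroup (Fin 4)) :=
  Sylow.ofCard (zpowers a1) (by rw [Nat.card_zpowers, orderOf_a1, factA4, pow_one])

private noncomputable def S2 : Sylow 3 (alternatingGroup (Fin 4)) :=
  Sylow.ofCard (zpowers a2) (by rw [Nat.card_zpowers, orderOf_a2, factA4, pow_one])

private lemma fix_sylows (a : alternatingGroup (Fin 4))
    (h : ∀ P : Sylow 3 (alternatingGroup (Fin 4)), a • P = P) : a = 1 := by
  have h1 : a ∈ zpowers a1 := by
    have := Sylow.smul_eq_iff_mem_normalizer.mp (h S1)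
    rw [show (S1 : Set (alternatingGroup (Fin 4))) = zpowers a1 from rfl,
      norm_a1] at this
    exact this
  have h2 : a ∈ zpowers a2 := by
    have := Sylow.smul_eq_iff_mem_normalizer.mp (h S2)
    rw [show (S2 : Set (alternatingGroup (Fin 4))) = zpowers a2 from rfl,
      norm_a2] at this
    exact this
  rw [mem_zp a1 a1_cube] at h1
  rw [mem_zp a2 a2_cube] at h2
  clear h
  revert h1 h2; revert a; decide

private lemma card_sylow_A4 : Nat.card (Sylow 3 (alternatingGroup (Fin 4))) = 4 := by
  rw [Sylow.card_eq_index_normalizer S1]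
  rw [show Subgroup.normalizer (S1 : Set (alternatingGroup (Fin 4))) = zpowers a1 by
    rw [show (S1 : Set (alternatingGroup (Fin 4))) = zpowers a1 from
      rfl, norm_a1]]
  have hm := Subgroup.card_mul_index (zpowers a1)
  rw [Nat.card_zpowers, orderOf_a1, cardA4] at hm
  omega

private lemma homA4_trivial (ρ : (alternatingGroup (Fin 4)) →* ℤˣ) (x : alternatingGroup (Fin 4)) :
    ρ x = 1 := by
  obtain ⟨x, hx⟩ := x
  have hx' : x ∈ closure {σ : Perm (Fin 4) | σ.IsThreeCycle} := by
    rwa [Equiv.Perm.closure_three_cycles_eq_alternating]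
  induction hx' using closure_induction with
  | mem σ hσ =>
    have hσ3 : σ ^ 3 = 1 := by rw [← hσ.orderOf]; exact pow_orderOf_eq_one σ
    have h3 : (⟨σ, hx⟩ : alternatingGroup (Fin 4)) ^ 3 = 1 := by
      apply Subtype.ext
      push_cast
      exact hσ3
    have hp3 := map_pow ρ (⟨σ, hx⟩ : alternatingGroup (Fin 4)) 3
    rw [h3, map_one] at hp3
    have hsq : ρ ⟨σ, hx⟩ * ρ ⟨σ, hx⟩ = 1 := Int.units_mul_self _
    calc ρ ⟨σ, hx⟩ = ρ ⟨σ, hx⟩ ^ 3 * (ρ ⟨σ, hx⟩ * ρ ⟨σ, hx⟩)⁻¹ := by group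
    _ = 1 := by rw [← hp3, hsq]; simp
  | one => rw [show (⟨1, hx⟩ : alternatingGroup (Fin 4)) = 1 from rfl, map_one]
  | mul a b ha hb iha ihb =>
    rw [Equiv.Perm.closure_three_cycles_eq_alternating] at ha hb
    rw [show (⟨a * b, hx⟩ : alternatingGroup (Fin 4)) = ⟨a, ha⟩ * ⟨b, hb⟩ from rfl, map_mul,
      iha ha, ihb hb, one_mul]
  | inv a ha iha =>
    rw [Equiv.Perm.closure_three_cycles_eq_alternating] at ha
    rw [show (⟨a⁻¹, hx⟩ : alternatingGroup (Fin 4)) = (⟨a, ha⟩)⁻¹ from rfl, map_inv, iha ha]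
    simp

private lemma congr_conj {G H : Type*} [Group G] [Group H] (e : G ≃* H) (x : G) :
    MulAut.congr e (MulAut.conj x) = MulAut.conj (e x) := by
  ext y
  simp [MulAut.congr_apply, MulAut.conj_apply, map_mul]

private lemma eq_of_le_of_index_two {G : Type*} [Group G] {H K : Subgroup G}
    (hle : H ≤ K) (hH : H.index = 2) (hK : K.index = 2) : H = K := by
  have := Subgroup.relIndex_mul_index hle
  rw [hH, hK] at this
  have h1 : H.relIndex K = 1 := by omega
  exact le_antisymm hle (Subgroup.relIndex_eq_one.mp h1)

private def permCongrMul {α β : Type*} (e : α ≃ β) : Perm α ≃* Perm β :=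
  { e.permCongr with
    map_mul' := fun p q => by ext x; simp [Equiv.permCongr_apply] }

private lemma cardA5 : Nat.card (alternatingGroup (Fin 5)) = 60 := by
  have h : 2 * Fintype.card (alternatingGroup (Fin 5)) = 120 := by
    rw [two_mul_card_alternatingGroup, Fintype.card_perm, Fintype.card_fin]
    norm_num [Nat.factorial]
  rw [Nat.card_eq_fintype_card]
  omega


/-- The group `S5 ⋔ S4`: the index-2 subgroup of `S5 × S4` consisting of pairs
`(σ, τ)` with `sgn σ = sgn τ`. -/
def S5pitchforkS4 : Subgroup (Perm (Fin 5) × Perm (Fin 4)) :=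
  MonoidHom.ker
    ((Equiv.Perm.sign.comp (MonoidHom.fst (Perm (Fin 5)) (Perm (Fin 4)))) *
     (Equiv.Perm.sign.comp (MonoidHom.snd (Perm (Fin 5)) (Perm (Fin 4)))))

set_option maxHeartbeats 1000000 in
/-- Let `G` have a normal subgroup `N ≅ A4` with `G/N ≅ S5`, `C_G(N) ∩ N = 1`,
`C_G(N)·N` of index 2 in `G` and `C_G(N) ≅ A5`.  Then `G ≅ S5 ⋔ S4`. -/
theorem iso_S5_pitchfork_S4 (G : Type*) [Group G]
    (N : Subgroup G) [N.Normal]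
    (hN : Nonempty (N ≃* alternatingGroup (Fin 4)))
    (hquot : Nonempty ((G ⧸ N) ≃* Perm (Fin 5)))
    (hcap : Subgroup.centralizer (N : Set G) ⊓ N = ⊥)
    (hindex : (Subgroup.centralizer (N : Set G) ⊔ N).index = 2)
    (hC : Nonempty (Subgroup.centralizer (N : Set G) ≃* alternatingGroup (Fin 5))) :
    Nonempty (G ≃* S5pitchforkS4) := by
  obtain ⟨e4⟩ := hN
  obtain ⟨e5⟩ := hquot
  obtain ⟨eC⟩ := hC
  set C := Subgroup.centralizer (N : Set G) with hCdef
  haveI : Finite N := Finite.of_equiv _ e4.toEquiv.symm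
  haveI : Finite (G ⧸ N) := Finite.of_equiv _ e5.toEquiv.symm
  haveI : Finite G := Finite.of_equiv _ (Subgroup.groupEquivQuotientProdSubgroup (s := N)).symm
  have cardN : Nat.card N = 12 := by rw [Nat.card_congr e4.toEquiv, cardA4]
  have cardQ : Nat.card (G ⧸ N) = 120 := by
    rw [Nat.card_congr e5.toEquiv, Nat.card_eq_fintype_card, Fintype.card_perm, Fintype.card_fin]
    norm_num [Nat.factorial]
  have cardC : Nat.card C = 60 := by rw [Nat.card_congr eC.toEquiv, cardA5]
  have cardG : Nat.card G = 1440 := by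
    rw [Subgroup.card_eq_card_quotient_mul_card_subgroup N, cardQ, cardN]
  have cardU : Nat.card ℤˣ = 2 := by
    rw [Nat.card_eq_fintype_card, Fintype.card_units_int]
  -- the quotient homomorphism to S5
  let f : G →* Perm (Fin 5) := e5.toMonoidHom.comp (QuotientGroup.mk' N)
  have hfker : f.ker = N := by
    ext g
    simp only [f, MonoidHom.mem_ker, MonoidHom.comp_apply, MulEquiv.coe_toMonoidHom]
    rw [MulEquiv.map_eq_one_iff]
    exact QuotientGroup.eq_one_iff g
  have hfsurj : Function.Surjective f := e5.surjective.comp (QuotientGroup.mk'_surjective N)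
  -- the conjugation homomorphism to S4
  let θ : G →* MulAut (alternatingGroup (Fin 4)) :=
    (MulAut.congr e4).toMonoidHom.comp MulAut.conjNormal
  let act := MulAction.toPermHom (MulAut (alternatingGroup (Fin 4)))
    (Sylow 3 (alternatingGroup (Fin 4)))
  let eX : Sylow 3 (alternatingGroup (Fin 4)) ≃ Fin 4 := Finite.equivFinOfCardEq card_sylow_A4
  let g4 : G →* Perm (Fin 4) := (permCongrMul eX).toMonoidHom.comp (act.comp θ)
  have hg4_eval : ∀ g : G, g4 g = 1 ↔ ∀ P : Sylow 3 (alternatingGroup (Fin 4)), θ g • P = P := by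
    intro g
    show permCongrMul eX (act (θ g)) = 1 ↔ _
    rw [MulEquiv.map_eq_one_iff]
    constructor
    · intro h P
      have := Equiv.ext_iff.mp h P
      simpa [act, MulAction.toPermHom_apply] using this
    · intro h
      apply Equiv.ext
      intro P
      simpa [act, MulAction.toPermHom_apply] using h P
  have hker4C : g4.ker = C := by
    apply le_antisymm
    · have hKN : ∀ m : G, m ∈ g4.ker → m ∈ N → m = 1 := by
        intro m hm hmN
        have h1 := (hg4_eval m).mp hm
        have h2 : θ m = MulAut.conj (e4 ⟨m, hmN⟩) := by
          have hv : MulAut.conjNormal m = MulAut.conj (⟨m, hmN⟩ : N) := MulAut.conjNormal_val (h := ⟨m, hmN⟩)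
          show MulAut.congr e4 (MulAut.conjNormal m) = _
          rw [hv, congr_conj]
        have h3 : ∀ P : Sylow 3 (alternatingGroup (Fin 4)), (e4 ⟨m, hmN⟩) • P = P := by
          intro P
          rw [Sylow.smul_def, ← h2]
          exact h1 P
        have h4 := fix_sylows _ h3
        have h5 : (⟨m, hmN⟩ : N) = 1 := by
          apply e4.injective
          rw [h4, map_one]
        exact Subtype.ext_iff.mp h5
      intro k hk
      rw [hCdef, Subgroup.mem_centralizer_iff]
      intro n hn
      have hc1 : k * n * k⁻¹ * n⁻¹ ∈ N := by
        have h1 : k * n * k⁻¹ ∈ N := Subgroup.Normal.conj_mem ‹N.Normal› n hn k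
        exact mul_mem h1 (inv_mem hn)
      have hc2 : k * n * k⁻¹ * n⁻¹ ∈ g4.ker := by
        have h1 : n * k⁻¹ * n⁻¹ ∈ g4.ker :=
          Subgroup.Normal.conj_mem (MonoidHom.normal_ker g4) _ (inv_mem hk) n
        have h2 := mul_mem hk h1
        rwa [show k * (n * k⁻¹ * n⁻¹) = k * n * k⁻¹ * n⁻¹ by group] at h2
      have h6 := hKN _ hc2 hc1
      have h8 : k * n * k⁻¹ = n := mul_inv_eq_one.mp h6
      exact (mul_inv_eq_iff_eq_mul.mp h8).symm
    · intro c hc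
      rw [MonoidHom.mem_ker]
      have hθ : MulAut.conjNormal c = (1 : MulAut N) := by
        refine MulEquiv.ext fun n => Subtype.ext ?_
        show ((MulAut.conjNormal c) n : G) = (n : G)
        rw [MulAut.conjNormal_apply, ← Subgroup.mem_centralizer_iff.mp hc n n.2]
        group
      show permCongrMul eX (act (MulAut.congr e4 (MulAut.conjNormal c))) = 1
      rw [hθ, map_one, map_one, map_one]
  -- surjectivity of g4
  have hCindex : C.index = 24 := by
    have h := Subgroup.card_mul_index C
    rw [cardC, cardG] at h; omega
  have cardPerm4 : Nat.card (Perm (Fin 4)) = 24 := by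
    rw [Nat.card_eq_fintype_card, Fintype.card_perm, Fintype.card_fin]
    norm_num [Nat.factorial]
  have hg4surj : Function.Surjective g4 := by
    rw [← MonoidHom.range_eq_top]
    apply Subgroup.eq_top_of_card_eq
    rw [← Subgroup.index_ker g4, hker4C, hCindex, cardPerm4]
  -- the two sign characters
  let s5 := Equiv.Perm.sign.comp f
  let s4 := Equiv.Perm.sign.comp g4
  have hs5surj : Function.Surjective s5 := (Equiv.Perm.sign_surjective (Fin 5)).comp hfsurj
  have hs4surj : Function.Surjective s4 := (Equiv.Perm.sign_surjective (Fin 4)).comp hg4surj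
  have hidx5 : s5.ker.index = 2 := by
    rw [Subgroup.index_ker, MonoidHom.range_eq_top.mpr hs5surj, Subgroup.card_top, cardU]
  have hidx4 : s4.ker.index = 2 := by
    rw [Subgroup.index_ker, MonoidHom.range_eq_top.mpr hs4surj, Subgroup.card_top, cardU]
  have hCN5 : C ⊔ N ≤ s5.ker := by
    apply sup_le
    · intro c hc
      have key : ∀ x : C, (s5.comp C.subtype) x = 1 := by
        haveI : Nontrivial (alternatingGroup (Fin 5)) := alternatingGroup.nontrivial_of_three_le_card (by simp)
        haveI : Nontrivial C := eC.toEquiv.nontrivial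
        haveI : IsSimpleGroup C :=
          IsSimpleGroup.isSimpleGroup_of_surjective eC.symm.toMonoidHom eC.symm.surjective
        intro x
        rcases Subgroup.Normal.eq_bot_or_eq_top
            (MonoidHom.normal_ker (s5.comp C.subtype)) with hb | ht
        · exfalso
          have hinj := (MonoidHom.ker_eq_bot_iff _).mp hb
          have hle := Nat.card_le_card_of_injective _ hinj
          rw [cardC, cardU] at hle; omega
        · have hx : x ∈ (s5.comp C.subtype).ker := ht ▸ Subgroup.mem_top x
          exact hx
      have h := key ⟨c, hc⟩
      simpa using h
    · intro n hn
      show Equiv.Perm.sign (f n) = 1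
      rw [← hfker] at hn
      rw [hn, map_one]
  have hN4' : ∀ n ∈ N, s4 n = 1 := by
    intro n hn
    have h := homA4_trivial (s4.comp (N.subtype.comp e4.symm.toMonoidHom)) (e4 ⟨n, hn⟩)
    simpa using h
  have hCN4 : C ⊔ N ≤ s4.ker := by
    apply sup_le
    · intro c hc
      show Equiv.Perm.sign (g4 c) = 1
      have hg : g4 c = 1 := by rw [← MonoidHom.mem_ker, hker4C]; exact hc
      rw [hg, map_one]
    · exact fun n hn => hN4' n hn
  have hker5 : C ⊔ N = s5.ker := eq_of_le_of_index_two hCN5 hindex hidx5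
  have hker4 : C ⊔ N = s4.ker := eq_of_le_of_index_two hCN4 hindex hidx4
  -- the embedding into S5 × S4
  let Φ := f.prod g4
  have hΦker : Φ.ker = ⊥ := by
    rw [MonoidHom.ker_prod, hfker, hker4C, inf_comm]
    exact hcap
  have hΦinj : Function.Injective Φ := (MonoidHom.ker_eq_bot_iff Φ).mp hΦker
  have hrange : Φ.range ≤ S5pitchforkS4 := by
    rintro x ⟨g, rfl⟩
    show s5 g * s4 g = 1
    by_cases hg : g ∈ C ⊔ N
    · have h5 : s5 g = 1 := by rw [hker5] at hg; exact hg
      have h4 : s4 g = 1 := by rw [hker4] at hg; exact hg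
      rw [h5, h4, mul_one]
    · have h5 : s5 g = -1 := by
        rcases Int.units_eq_one_or (s5 g) with h | h
        · exact absurd (by rw [hker5]; exact MonoidHom.mem_ker.mpr h) hg
        · exact h
      have h4 : s4 g = -1 := by
        rcases Int.units_eq_one_or (s4 g) with h | h
        · exact absurd (by rw [hker4]; exact MonoidHom.mem_ker.mpr h) hg
        · exact h
      rw [h5, h4]
      decide
  have cardPF : Nat.card S5pitchforkS4 = 1440 := by
    set χ := ((Equiv.Perm.sign.comp (MonoidHom.fst (Perm (Fin 5)) (Perm (Fin 4)))) *
      (Equiv.Perm.sign.comp (MonoidHom.snd (Perm (Fin 5)) (Perm (Fin 4))))) with hχ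
    have hχsurj : Function.Surjective χ := by
      intro u
      rcases Int.units_eq_one_or u with rfl | rfl
      · exact ⟨1, by simp⟩
      · refine ⟨(Equiv.swap 0 1, 1), ?_⟩
        show Equiv.Perm.sign (Equiv.swap (0 : Fin 5) 1) * Equiv.Perm.sign (1 : Perm (Fin 4)) = -1
        rw [Equiv.Perm.sign_swap (by decide), map_one, mul_one]
    have hidx : χ.ker.index = 2 := by
      rw [Subgroup.index_ker, MonoidHom.range_eq_top.mpr hχsurj, Subgroup.card_top, cardU]
    have hm := Subgroup.card_mul_index χ.ker
    rw [hidx] at hm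
    have hcard2880 : Nat.card (Perm (Fin 5) × Perm (Fin 4)) = 2880 := by
      rw [Nat.card_prod, Nat.card_eq_fintype_card, Nat.card_eq_fintype_card,
        Fintype.card_perm, Fintype.card_perm, Fintype.card_fin, Fintype.card_fin]
      norm_num [Nat.factorial]
    rw [hcard2880] at hm
    show Nat.card χ.ker = 1440
    omega
  have cardRange : Nat.card Φ.range = 1440 := by
    rw [← cardG]
    exact (Nat.card_congr (MonoidHom.ofInjective hΦinj).toEquiv).symm
  have heq : Φ.range = S5pitchforkS4 :=
    Subgroup.eq_of_le_of_card_ge hrange (by rw [cardPF, cardRange])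
  exact ⟨(MonoidHom.ofInjective hΦinj).trans (MulEquiv.subgroupCongr heq)⟩
end
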